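/- If I is an ideal of a commutative monoid M and m ∈ M \ I, then there exists a strongly irreducible ideal Q of M with I ⊆ Q and m ∉ Q (namely, any ideal maximal among the ideals containing I and not containing m, which exists by Zorn's lemma, is strongly irreducible). -/
import Mathlib


/-- An ideal of a commutative monoid `M`: a subset closed under
multiplication by arbitrary elements of `M`. -/
def IsIdealM {M : Type*} [CommMonoid M] (I : Set M) : Prop :=
  ∀ x ∈ I, ∀ m : M, x * m ∈ I

/-- A strongly irreducible ideal: a proper ideal `I` such that for all ideals
`J`, `K`, if `J ∩ K ⊆ I` then `J ⊆ I` or `K ⊆ I`. -/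
def IsStronglyIrr {M : Type*} [CommMonoid M] (I : Set M) : Prop :=
  IsIdealM I ∧ I ≠ Set.univ ∧
    ∀ J K : Set M, IsIdealM J → IsIdealM K → J ∩ K ⊆ I → J ⊆ I ∨ K ⊆ I

/-- A prime ideal of a commutative monoid. -/
def IsPrimeIdealM {M : Type*} [CommMonoid M] (P : Set M) : Prop :=
  IsIdealM P ∧ P ≠ Set.univ ∧ ∀ x y : M, x * y ∈ P → x ∈ P ∨ y ∈ P

/-- A maximal ideal of a commutative monoid: a proper ideal maximal among
proper ideals. -/
def IsMaximalIdealM {M : Type*} [CommMonoid M] (I : Set M) : Prop :=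
  IsIdealM I ∧ I ≠ Set.univ ∧
    ∀ J : Set M, IsIdealM J → J ≠ Set.univ → I ⊆ J → J = I

/-- `SIr M` is the set (type) of strongly irreducible ideals of `M`. -/
structure SIr (M : Type*) [CommMonoid M] where
  carrier : Set M
  strongly_irr : IsStronglyIrr carrier

namespace SIr

variable {M : Type*} [CommMonoid M]

@[ext] theorem ext {I J : SIr M} (h : I.carrier = J.carrier) : I = J := by
  cases I; cases J; simpa using h

/-- `KK X = ⋂_{I ∈ X} I`, the kernel of a set of strongly irreducible ideals. -/
def KK (X : Set (SIr M)) : Set M := ⋂ I ∈ X, I.carrier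

/-- The hull-kernel operator `HK`: for nonempty `X`,
`HK X = {J ∈ S(M) : K(X) ⊆ J}`, and `HK ∅ = ∅`. -/
def HK (X : Set (SIr M)) : Set (SIr M) :=
  {J : SIr M | X.Nonempty ∧ KK X ⊆ J.carrier}

theorem HK_empty : HK (∅ : Set (SIr M)) = ∅ := by
  ext J
  simp [HK, Set.not_nonempty_empty]

theorem mem_HK_of_nonempty {X : Set (SIr M)} (hX : X.Nonempty) {J : SIr M} :
    J ∈ HK X ↔ KK X ⊆ J.carrier :=
  ⟨fun h => h.2, fun h => ⟨hX, h⟩⟩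

theorem KK_antitone {X X' : Set (SIr M)} (h : X ⊆ X') : KK X' ⊆ KK X := by
  intro m hm
  simp only [KK, Set.mem_iInter] at hm ⊢
  exact fun I hI => hm I (h hI)

theorem KK_isIdeal (X : Set (SIr M)) : IsIdealM (KK X) := by
  intro x hx m
  simp only [KK, Set.mem_iInter] at hx ⊢
  exact fun I hI => I.strongly_irr.1 x (hx I hI) m

theorem subset_HK (X : Set (SIr M)) : X ⊆ HK X := by
  intro J hJ
  refine ⟨⟨J, hJ⟩, fun m hm => ?_⟩
  simp only [KK, Set.mem_iInter] at hm
  exact hm J hJ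

theorem HK_mono {X X' : Set (SIr M)} (h : X ⊆ X') : HK X ⊆ HK X' := by
  rintro J ⟨hne, hsub⟩
  exact ⟨hne.mono h, (KK_antitone h).trans hsub⟩

theorem HK_idem (X : Set (SIr M)) : HK (HK X) = HK X := by
  refine Set.Subset.antisymm ?_ (subset_HK _)
  rintro J ⟨hne, hsub⟩
  obtain ⟨I, hI⟩ := hne
  refine ⟨hI.1, Set.Subset.trans ?_ hsub⟩
  intro m hm
  simp only [KK, Set.mem_iInter]
  exact fun L hL => hL.2 hm

theorem HK_union (X X' : Set (SIr M)) : HK (X ∪ X') = HK X ∪ HK X' := by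
  rcases X.eq_empty_or_nonempty with rfl | hX
  · rw [Set.empty_union, HK_empty, Set.empty_union]
  rcases X'.eq_empty_or_nonempty with rfl | hX'
  · rw [Set.union_empty, HK_empty, Set.union_empty]
  refine Set.Subset.antisymm ?_
    (Set.union_subset (HK_mono Set.subset_union_left)
      (HK_mono Set.subset_union_right))
  rintro J ⟨-, hsub⟩
  have hKK : KK X ∩ KK X' ⊆ J.carrier := by
    refine Set.Subset.trans ?_ hsub
    intro m hm
    simp only [KK, Set.mem_iInter, Set.mem_inter_iff] at hm ⊢
    rintro I (hI | hI)
    · exact hm.1 I hI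
    · exact hm.2 I hI
  rcases J.strongly_irr.2.2 (KK X) (KK X') (KK_isIdeal X) (KK_isIdeal X') hKK with h | h
  · exact Or.inl ⟨hX, h⟩
  · exact Or.inr ⟨hX', h⟩

/-- The terminal-space (Zariski) topology on `SIr M`: the closed sets are
exactly the sets of the form `HK X`. -/
instance instTopologicalSpace : TopologicalSpace (SIr M) :=
  TopologicalSpace.ofClosed (Set.range HK)
    ⟨∅, HK_empty⟩
    (fun A hA => by
      refine ⟨⋂₀ A, Set.Subset.antisymm (Set.subset_sInter fun C hC => ?_) (subset_HK _)⟩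
      obtain ⟨Y, hY⟩ := hA hC
      calc HK (⋂₀ A) ⊆ HK C := HK_mono (Set.sInter_subset_of_mem hC)
        _ = HK (HK Y) := by rw [hY]
        _ = HK Y := HK_idem Y
        _ = C := hY)
    (fun A hA B hB => by
      obtain ⟨Y, hY⟩ := hA
      obtain ⟨Z, hZ⟩ := hB
      exact ⟨Y ∪ Z, by rw [HK_union, hY, hZ]⟩)

theorem isClosed_iff {C : Set (SIr M)} : IsClosed C ↔ ∃ X, HK X = C := by
  rw [← isOpen_compl_iff]
  show Cᶜᶜ ∈ Set.range HK ↔ _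
  rw [compl_compl]
  exact Iff.rfl

end SIr

/-- if `I` is an ideal and `m ∉ I`, there is a strongly
irreducible ideal `Q` with `I ⊆ Q` and `m ∉ Q`. -/
theorem exists_stronglyIrr_between (M : Type*) [CommMonoid M]
    (I : Set M) (hI : IsIdealM I) (m : M) (hm : m ∉ I) :
    ∃ Q : Set M, IsStronglyIrr Q ∧ I ⊆ Q ∧ m ∉ Q := by
  set S : Set (Set M) := {J | IsIdealM J ∧ I ⊆ J ∧ m ∉ J} with hS
  obtain ⟨Q, hQS, hQmax⟩ : ∃ Q ∈ S, ∀ J ∈ S, Q ⊆ J → J = Q := by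
    obtain ⟨Q, hQ⟩ := zorn_subset_nonempty S (fun c hc hchain hne => by
      refine ⟨⋃₀ c, ⟨?_, ?_, ?_⟩, fun J hJ => Set.subset_sUnion_of_mem hJ⟩
      · rintro x ⟨J, hJ, hx⟩ a
        exact ⟨J, hJ, (hc hJ).1 x hx a⟩
      · obtain ⟨J, hJ⟩ := hne
        exact (hc hJ).2.1.trans (Set.subset_sUnion_of_mem hJ)
      · rintro ⟨J, hJ, hx⟩
        exact (hc hJ).2.2 hx) I ⟨hI, subset_rfl, hm⟩
    exact ⟨Q, hQ.2.prop, fun J hJ hsub => hQ.2.eq_of_ge hJ hsub⟩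
  obtain ⟨hQideal, hIQ, hmQ⟩ := hQS
  refine ⟨Q, ⟨hQideal, fun h => hmQ (h ▸ Set.mem_univ m), ?_⟩, hIQ, hmQ⟩
  intro J K hJ hK hJK
  by_contra hcon
  push_neg at hcon
  obtain ⟨hJQ, hKQ⟩ := hcon
  obtain ⟨j, hjJ, hjQ⟩ := Set.not_subset.1 hJQ
  obtain ⟨k, hkK, hkQ⟩ := Set.not_subset.1 hKQ
  have key : ∀ x : M, x ∈ J ∪ K → x ∉ Q → ∃ a, m = x * a := by
    intro x hxJK hxQ
    have hmem : m ∈ Q ∪ {y | ∃ a, y = x * a} := by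
      have : Q ∪ {y | ∃ a, y = x * a} ∉ S := fun hmem => by
        have := hQmax _ hmem Set.subset_union_left
        exact hxQ (this ▸ Set.mem_union_right _ ⟨1, (mul_one x).symm⟩)
      simp only [hS, Set.mem_setOf_eq, not_and, not_not] at this
      refine this ?_ (hIQ.trans Set.subset_union_left)
      rintro y (hy | ⟨a, rfl⟩) b
      · exact Or.inl (hQideal y hy b)
      · exact Or.inr ⟨a * b, mul_assoc x a b⟩
    rcases hmem with h | ⟨a, ha⟩
    · exact absurd h hmQ
    · exact ⟨a, ha⟩
  obtain ⟨a, ha⟩ := key j (Or.inl hjJ) hjQ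
  obtain ⟨b, hb⟩ := key k (Or.inr hkK) hkQ
  have hmJ : m ∈ J := ha ▸ hJ j hjJ a
  have hmK : m ∈ K := hb ▸ hK k hkK b
  exact hmQ (hJK ⟨hmJ, hmK⟩)
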